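/- For every positive integer k and complex numbers x, q with |q| < 1, the generating function over the set P_{2k} of partitions whose largest part is exactly 2k satisfies: Σ_{λ ∈ P_{2k}} x^{pi(λ)} · q^{|λ|} = q^{2k} · Σ_{0 ≤ j ≤ k} x^{2j} · q^{binom(2j,2)} / ((q;q)_{2j} · (q²;q²)_{k−j}), where pi(λ) is the parity index of the nondecreasing sequence of the parts of λ. -/

import Mathlib

open scoped BigOperators

namespace SolPaper

/-- The finite q-Pochhammer symbol `(a;q)_n = (1-a)(1-aq)⋯(1-aq^{n-1})`. -/
noncomputable def qPoch (a q : ℂ) (n : ℕ) : ℂ := ∏ i ∈ Finset.range n, (1 - a * q ^ i)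

/-- The infinite q-Pochhammer symbol `(a;q)_∞`. -/
noncomputable def qPochInf (a q : ℂ) : ℂ := ∏' i : ℕ, (1 - a * q ^ i)

/-- `sol p` : the number of maximal runs of consecutive integers among the parts of `p`
that have odd length.  A maximal run is an interval `[a,b]` all of whose members are
parts, with `a-1` and `b+1` not parts; its length `b-a+1` is odd iff `b-a` is even. -/
def sol {n : ℕ} (p : n.Partition) : ℕ :=
  ((p.parts.toFinset ×ˢ p.parts.toFinset).filter fun ab =>
      ab.1 ≤ ab.2 ∧ (∀ c ∈ Finset.Icc ab.1 ab.2, c ∈ p.parts) ∧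
      (ab.1 - 1) ∉ p.parts ∧ (ab.2 + 1) ∉ p.parts ∧ Even (ab.2 - ab.1)).card

/-- The `k`-measure of a partition: the length of the longest subsequence of its parts
in which any two members differ by at least `k`. -/
noncomputable def kMeasure (k : ℕ) {n : ℕ} (p : n.Partition) : ℕ :=
  sSup {m : ℕ | ∃ l : List ℕ, l.Sublist (Multiset.sort p.parts (· ≤ ·)) ∧
    l.Pairwise (fun a b => (k : ℤ) ≤ |(a : ℤ) - (b : ℤ)|) ∧ l.length = m}

/-- The 2-modular Durfee side: the largest `k` such that the 2-modular diagram contains a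
`k × k` square, i.e. such that at least `k` parts are `≥ 2k-1` (row `i` of the 2-modular
diagram has `⌈λ_i/2⌉` cells). -/
noncomputable def Dur2 {n : ℕ} (p : n.Partition) : ℕ :=
  sSup {k : ℕ | k ≤ (p.parts.filter fun a => 2 * k - 1 ≤ a).card}

/-- Type I: with `k = Dur2 p`, the `k`-th largest part satisfies `λ_k > 2k-1`,
equivalently at least `k` parts exceed `2k-1`. -/
def TypeI {n : ℕ} (p : n.Partition) : Prop :=
  Dur2 p ≤ (p.parts.filter fun a => 2 * Dur2 p - 1 < a).card

/-- Type II: with `k = Dur2 p`, the `k`-th largest part satisfies `λ_k = 2k-1`,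
equivalently at least `k` parts are `≥ 2k-1` but fewer than `k` parts exceed `2k-1`. -/
def TypeII {n : ℕ} (p : n.Partition) : Prop :=
  Dur2 p ≤ (p.parts.filter fun a => 2 * Dur2 p - 1 ≤ a).card ∧
  (p.parts.filter fun a => 2 * Dur2 p - 1 < a).card < Dur2 p

open Classical in
/-- The 2-modular sub-Durfee side.  With `k = Dur2 p` and `β` the subpartition below the
2-modular Durfee square (the parts of index `> k`), the number of parts of `β` that are
`≥ v` (for `v > λ_{k+1}`-irrelevant ranges handled by truncated subtraction) is
`(number of parts of p ≥ v) - k`.  For type I it is the largest `m` with at least `m`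
parts of `β` being `≥ 2m-1` (a Durfee `m × m` square in `[β]₂`); for type II the largest
`m` with at least `m` parts of `β` being `≥ 2m+1` (an `m × (m+1)` rectangle in `[β]₂`). -/
noncomputable def dur2 {n : ℕ} (p : n.Partition) : ℕ :=
  if TypeI p then
    sSup {m : ℕ | m ≤ (p.parts.filter fun a => 2 * m - 1 ≤ a).card - Dur2 p}
  else
    sSup {m : ℕ | m ≤ (p.parts.filter fun a => 2 * m + 1 ≤ a).card - Dur2 p}

/-- The multiset of parts lying below the 2-modular Durfee square, i.e. the smallest
`ℓ(p) - Dur2 p` parts. -/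
noncomputable def belowParts {n : ℕ} (p : n.Partition) : Multiset ℕ :=
  ↑((Multiset.sort p.parts (· ≤ ·)).take (p.parts.card - Dur2 p))

/-- `alphaStar p` : the parts of the conjugate of the 2-modular diagram of the
subpartition `α` to the right of the 2-modular Durfee square (drawn with right-border
1's, so `α_i = λ_i - (2k-1)` for `i ≤ k`).  Column `j ≥ 1` of `[α]₂` contributes the part
`2 · #{i : λ_i ≥ 2k-1+2j}`. -/
noncomputable def alphaStar {n : ℕ} (p : n.Partition) : Multiset ℕ :=
  Multiset.filter (fun v => 0 < v)
    ((Finset.Icc 1 n).val.map fun j =>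
      2 * (p.parts.filter fun a => 2 * Dur2 p - 1 + 2 * j ≤ a).card)

/-- Number of parity switches between adjacent entries of a list. -/
def parityChanges : List ℕ → ℕ
  | a :: b :: rest => (if a % 2 = b % 2 then 0 else 1) + parityChanges (b :: rest)
  | _ => 0

/-- The parity index of a finite sequence `s`: the number of parity switches in
`0, s₁, …, s_l` read from left to right. -/
def parityIndex (s : List ℕ) : ℕ := parityChanges (0 :: s)

/-- The parity index of a partition: the parity index of its parts listed in
nondecreasing order. -/
def partPi {n : ℕ} (p : n.Partition) : ℕ :=
  parityIndex (Multiset.sort p.parts (· ≤ ·))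

open Classical in
/-- The alternating index of a partition into odd parts: the parity index of the
nondecreasing sequence `η̃` formed by the parts of `η = α* ∪ β` together with one extra
part equal to `2k` (type I) or `2k-1` (type II), where `k = Dur2 p`. -/
noncomputable def altIdx {n : ℕ} (p : n.Partition) : ℕ :=
  parityIndex (Multiset.sort
    (alphaStar p + belowParts p +
      {if TypeI p then 2 * Dur2 p else 2 * Dur2 p - 1}) (· ≤ ·))

/-- `A1 n k m`: the number of partitions of `n` into odd parts of type I with 2-modular
Durfee side `k` and 2-modular sub-Durfee side `m`. -/
noncomputable def A1 (n k m : ℕ) : ℕ :=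
  Nat.card {p : n.Partition // (∀ a ∈ p.parts, Odd a) ∧ TypeI p ∧ Dur2 p = k ∧ dur2 p = m}

/-- `A2 n k m`: the number of partitions of `n` into odd parts of type II with 2-modular
Durfee side `k` and 2-modular sub-Durfee side `m`. -/
noncomputable def A2 (n k m : ℕ) : ℕ :=
  Nat.card {p : n.Partition // (∀ a ∈ p.parts, Odd a) ∧ TypeII p ∧ Dur2 p = k ∧ dur2 p = m}

/-- `B n k m`: the number of partitions of `n` into odd parts with 2-modular Durfee side
`k` and alternating index `m`. -/
noncomputable def B (n k m : ℕ) : ℕ :=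
  Nat.card {p : n.Partition // (∀ a ∈ p.parts, Odd a) ∧ Dur2 p = k ∧ altIdx p = m}

/-- `D n k m`: the number of partitions of `n` into `k` distinct parts with exactly `m`
maximal sequences of consecutive integers of odd length. -/
noncomputable def D (n k m : ℕ) : ℕ :=
  Nat.card {p : n.Partition // p.parts.Nodup ∧ p.parts.card = k ∧ sol p = m}

def pc (s : Multiset ℕ) : ℕ := parityIndex (Multiset.sort s (· ≤ ·))

lemma parityChanges_append : ∀ (l₁ : List ℕ) (a : ℕ) (l₂ : List ℕ),
    parityChanges (l₁ ++ a :: l₂) = parityChanges (l₁ ++ [a]) + parityChanges (a :: l₂)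
  | [], a, l₂ => by simp [parityChanges]
  | [b], a, l₂ => by simp [parityChanges]
  | b :: c :: t, a, l₂ => by
      have ih := parityChanges_append (c :: t) a l₂
      simp only [List.cons_append] at ih ⊢
      simp only [parityChanges] at ih ⊢
      omega

lemma parityChanges_cons_replicate (v : ℕ) : ∀ c, parityChanges (v :: List.replicate c v) = 0
  | 0 => rfl
  | c + 1 => by
      simp [List.replicate_succ, parityChanges, parityChanges_cons_replicate v c]

lemma parityChanges_pair (a b : ℕ) :
    parityChanges [a, b] = if a % 2 = b % 2 then 0 else 1 := by
  simp [parityChanges]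

lemma exists_concat_sort (s : Multiset ℕ) :
    ∃ l : List ℕ, (0 :: Multiset.sort s (· ≤ ·)) = l ++ [s.sup] := by
  rcases List.eq_nil_or_concat (Multiset.sort s (· ≤ ·)) with h | ⟨L, b, h⟩
  · refine ⟨[], ?_⟩
    have hs : s = 0 := by rw [← Multiset.sort_eq s (· ≤ ·), h]; rfl
    rw [h, hs]
    simp
  · have hb : b = s.sup := by
      have hmem : b ∈ s := by
        rw [← Multiset.mem_sort (α := ℕ) (r := (· ≤ ·)), h, List.concat_eq_append]
        simp
      have h1 : b ≤ s.sup := Multiset.le_sup hmem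
      have h2 : s.sup ≤ b := by
        rw [Multiset.sup_le]
        intro a ha
        rw [← Multiset.mem_sort (α := ℕ) (r := (· ≤ ·)), h, List.concat_eq_append,
          List.mem_append] at ha
        have hs := Multiset.pairwise_sort s (· ≤ ·)
        rw [h, List.concat_eq_append] at hs
        rcases ha with ha | ha
        · exact (List.pairwise_append.mp hs).2.2 a ha b (by simp)
        · simp at ha; omega
      omega
    refine ⟨0 :: L, ?_⟩
    rw [h, hb, List.concat_eq_append]
    rfl

lemma sort_add_replicate (s : Multiset ℕ) (v c : ℕ) (hv : ∀ a ∈ s, a ≤ v) :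
    Multiset.sort (s + Multiset.replicate c v) (· ≤ ·)
      = Multiset.sort s (· ≤ ·) ++ List.replicate c v := by
  apply List.Perm.eq_of_pairwise' (r := (· ≤ ·))
  rotate_right
  · rw [← Multiset.coe_eq_coe, Multiset.sort_eq, ← Multiset.coe_add, Multiset.sort_eq,
      Multiset.coe_replicate]
  · exact Multiset.pairwise_sort _ _
  · rw [List.pairwise_append]
    refine ⟨Multiset.pairwise_sort _ _, List.pairwise_replicate.mpr (Or.inr le_rfl),
      fun a ha b hb => ?_⟩
    rw [List.eq_of_mem_replicate hb]
    exact hv a (Multiset.mem_sort (r := (· ≤ ·)) |>.mp ha)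

lemma sup_add_replicate (s : Multiset ℕ) (v c : ℕ) (hv : ∀ a ∈ s, a ≤ v) :
    (s + Multiset.replicate (c + 1) v).sup = v := by
  apply le_antisymm
  · rw [Multiset.sup_le]
    intro b hb
    rcases Multiset.mem_add.mp hb with hb | hb
    · exact hv b hb
    · rw [Multiset.eq_of_mem_replicate hb]
  · exact Multiset.le_sup (Multiset.mem_add.mpr (Or.inr (Multiset.mem_replicate.mpr
      ⟨Nat.succ_ne_zero c, rfl⟩)))

lemma sum_add_replicate (s : Multiset ℕ) (v c : ℕ) :
    (s + Multiset.replicate c v).sum = s.sum + c * v := by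
  rw [Multiset.sum_add, Multiset.sum_replicate, smul_eq_mul]

lemma pc_add_replicate (s : Multiset ℕ) (v c : ℕ) (hv : ∀ a ∈ s, a ≤ v) :
    pc (s + Multiset.replicate (c + 1) v)
      = pc s + (if s.sup % 2 = v % 2 then 0 else 1) := by
  obtain ⟨l, hl⟩ := exists_concat_sort s
  unfold pc parityIndex
  rw [sort_add_replicate s v (c + 1) hv]
  have h1 : (0 :: (Multiset.sort s (· ≤ ·) ++ List.replicate (c + 1) v))
      = (l ++ [s.sup]) ++ (v :: List.replicate c v) := by
    rw [← hl]
    simp [List.replicate_succ]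
  rw [h1, parityChanges_append (l ++ [s.sup]) v (List.replicate c v),
    parityChanges_cons_replicate, add_zero]
  have h2 : (l ++ [s.sup]) ++ [v] = l ++ s.sup :: [v] := by simp
  rw [h2, parityChanges_append l s.sup [v], parityChanges_pair, ← hl]

def Msub (m : ℕ) : Type := {s : Multiset ℕ // ∀ a ∈ s, 1 ≤ a ∧ a ≤ m}

instance : Unique (Msub 0) where
  default := ⟨0, by simp⟩
  uniq := by
    rintro ⟨s, hs⟩
    apply Subtype.ext
    show s = 0
    apply Multiset.eq_zero_of_forall_notMem
    intro a ha
    have := hs a ha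
    omega

def msubEquiv (m : ℕ) : Msub (m + 1) ≃ ℕ × Msub m where
  toFun s := (s.1.count (m + 1),
    ⟨s.1.filter (· ≠ (m + 1)), by
      intro a ha
      have h1 := s.2 a (Multiset.mem_of_mem_filter ha)
      have h2 : a ≠ m + 1 := by simpa using Multiset.of_mem_filter ha
      omega⟩)
  invFun p := ⟨p.2.1 + Multiset.replicate p.1 (m + 1), by
    intro a ha
    rcases Multiset.mem_add.mp ha with h | h
    · have := p.2.2 a h; omega
    · rw [Multiset.eq_of_mem_replicate h]; omega⟩
  left_inv s := by
    apply Subtype.ext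
    show s.1.filter (· ≠ (m + 1)) + Multiset.replicate (s.1.count (m + 1)) (m + 1) = s.1
    rw [← Multiset.filter_eq' s.1 (m + 1)]
    have h := Multiset.filter_add_not (fun a => a ≠ (m + 1)) s.1
    rw [Multiset.filter_congr (fun a _ => by simp : ∀ a ∈ s.1, (¬ a ≠ (m+1)) ↔ (a = m + 1))] at h
    exact h
  right_inv p := by
    rcases p with ⟨c, s⟩
    have hnot : (m + 1) ∉ s.1 := fun h => by have := s.2 _ h; omega
    have h1 : (s.1 + Multiset.replicate c (m + 1)).count (m + 1) = c := by
      rw [Multiset.count_add, Multiset.count_replicate_self,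
        Multiset.count_eq_zero.mpr hnot, zero_add]
    have h2 : (s.1 + Multiset.replicate c (m + 1)).filter (· ≠ (m + 1)) = s.1 := by
      rw [Multiset.filter_add, Multiset.filter_eq_self.mpr
        (fun a ha => (by have := s.2 a ha; omega : a ≠ m + 1)),
        Multiset.filter_eq_nil.mpr (fun a ha => by
          rw [Multiset.eq_of_mem_replicate ha]; simp), add_zero]
    exact Prod.ext h1 (Subtype.ext h2)

lemma msubEquiv_symm_apply (m : ℕ) (p : ℕ × Msub m) :
    ((msubEquiv m).symm p).1 = p.2.1 + Multiset.replicate p.1 (m + 1) := rfl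

noncomputable def wt (x q : ℂ) (s : Multiset ℕ) : ℂ := x ^ pc s * q ^ s.sum

lemma wt_add_replicate (x q : ℂ) (m c : ℕ) (s : Msub m) :
    wt x q (s.1 + Multiset.replicate (c + 1) (m + 1))
      = (q ^ (m + 1)) ^ (c + 1) *
        ((if s.1.sup % 2 = (m + 1) % 2 then (1 : ℂ) else x) * wt x q s.1) := by
  have hv : ∀ a ∈ s.1, a ≤ m + 1 := fun a ha => by have := s.2 a ha; omega
  unfold wt
  rw [pc_add_replicate s.1 (m + 1) c hv, sum_add_replicate]
  by_cases h : s.1.sup % 2 = (m + 1) % 2 <;>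
    simp only [h, if_true, if_false, if_pos, if_neg, add_zero] <;>
    rw [pow_add, ← pow_mul] <;> ring
lemma summable_wt_abs (x q : ℂ) (hq : ‖q‖ < 1) :
    ∀ m, Summable (fun s : Msub m => ‖wt x q s.1‖)
  | 0 => Summable.of_finite
  | (m + 1) => by
      rw [← (msubEquiv m).symm.summable_iff]
      have hrec := summable_wt_abs x q hq m
      have hr0 : (0:ℝ) ≤ ‖q‖ ^ (m + 1) := pow_nonneg (norm_nonneg q) _
      have hr1 : ‖q‖ ^ (m + 1) < 1 :=
        pow_lt_one₀ (norm_nonneg q) hq (Nat.succ_ne_zero m)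
      have hM1 : (1 : ℝ) ≤ max 1 (‖x‖) := le_max_left _ _
      apply Summable.of_nonneg_of_le (f := fun p : ℕ × Msub m =>
          max 1 (‖x‖) * ((‖q‖ ^ (m + 1)) ^ p.1 * ‖wt x q p.2.1‖))
        (fun p => norm_nonneg _)
      · rintro ⟨c, s⟩
        show ‖wt x q (((msubEquiv m).symm (c, s)).1)‖ ≤ _
        rw [msubEquiv_symm_apply]
        have hA : 0 ≤ ‖wt x q s.1‖ := norm_nonneg _
        cases c with
        | zero =>
            simp only [Multiset.replicate_zero, add_zero, pow_zero, one_mul]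
            nlinarith
        | succ c =>
            rw [wt_add_replicate, norm_mul, norm_mul, norm_pow, norm_pow]
            have hite : ‖if s.1.sup % 2 = (m + 1) % 2 then (1:ℂ) else x‖
                ≤ max 1 (‖x‖) := by
              split
              · simpa using hM1
              · exact le_max_right _ _
            calc (‖q‖ ^ (m+1)) ^ (c+1) *
                  (‖if s.1.sup % 2 = (m + 1) % 2 then (1:ℂ) else x‖ *
                    ‖wt x q s.1‖)
                = ‖if s.1.sup % 2 = (m + 1) % 2 then (1:ℂ) else x‖ *
                  ((‖q‖ ^ (m+1)) ^ (c+1) * ‖wt x q s.1‖) := by ring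
              _ ≤ max 1 (‖x‖) *
                  ((‖q‖ ^ (m+1)) ^ (c+1) * ‖wt x q s.1‖) :=
                  mul_le_mul_of_nonneg_right hite (by positivity)
      · exact ((summable_geometric_of_lt_one hr0 hr1).mul_of_nonneg hrec
          (fun c => pow_nonneg hr0 c) (fun s => norm_nonneg _)).mul_left _

lemma summable_of_le_wt (x q : ℂ) (hq : ‖q‖ < 1) (m : ℕ) (f : Multiset ℕ → ℂ)
    (hf : ∀ s : Msub m, ‖f s.1‖ ≤ ‖wt x q s.1‖) :
    Summable (fun s : Msub m => f s.1) :=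
  Summable.of_norm_bounded (summable_wt_abs x q hq m)
    (fun s => hf s)

lemma tsum_msub_succ (x q : ℂ) (hq : ‖q‖ < 1) (m : ℕ) (f : Multiset ℕ → ℂ)
    (hf : ∀ s : Msub (m + 1), ‖f s.1‖ ≤ ‖wt x q s.1‖) :
    ∑' s : Msub (m + 1), f s.1
      = (∑' s : Msub m, f s.1)
        + ∑' (c : ℕ), ∑' (s : Msub m), f (s.1 + Multiset.replicate (c + 1) (m + 1)) := by
  have hsum : Summable (fun s : Msub (m + 1) => f s.1) := summable_of_le_wt x q hq (m+1) f hf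
  have hprod : Summable (fun p : ℕ × Msub m => f (((msubEquiv m).symm p).1)) :=
    (msubEquiv m).symm.summable_iff.mpr hsum
  have hg : Summable (fun c : ℕ => ∑' s : Msub m, f (((msubEquiv m).symm (c, s)).1)) :=
    ⟨_, hprod.hasSum.prod_fiberwise (fun c => (hprod.prod_factor c).hasSum)⟩
  calc ∑' s : Msub (m + 1), f s.1
      = ∑' p : ℕ × Msub m, f (((msubEquiv m).symm p).1) :=
        ((msubEquiv m).symm.tsum_eq (fun s : Msub (m+1) => f s.1)).symm
    _ = ∑' (c : ℕ) (s : Msub m), f (((msubEquiv m).symm (c, s)).1) :=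
        Summable.tsum_prod' hprod (fun c => hprod.prod_factor c)
    _ = (∑' s : Msub m, f (((msubEquiv m).symm (0, s)).1))
        + ∑' (c : ℕ) (s : Msub m), f (((msubEquiv m).symm (c + 1, s)).1) :=
        Summable.tsum_eq_zero_add hg
    _ = _ := by
        have h0 : ∀ s : Msub m, (((msubEquiv m).symm (0, s)).1) = s.1 := fun s => by
          simp [msubEquiv_symm_apply]
        have h1 : ∀ (c : ℕ) (s : Msub m), (((msubEquiv m).symm (c + 1, s)).1)
            = s.1 + Multiset.replicate (c + 1) (m + 1) := fun c s => by
          simp [msubEquiv_symm_apply]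
        congr 1 <;>
          first
            | exact tsum_congr fun s => by rw [h0]
            | exact tsum_congr fun c => tsum_congr fun s => by rw [h1]

noncomputable def SA (x q : ℂ) (m : ℕ) : ℂ :=
  ∑' s : Msub m, (if s.1.sup % 2 = 0 then wt x q s.1 else 0)

noncomputable def SB (x q : ℂ) (m : ℕ) : ℂ :=
  ∑' s : Msub m, (if s.1.sup % 2 = 0 then 0 else wt x q s.1)

lemma abs_ite_le_wt (x q : ℂ) (P : Prop) [Decidable P] (s : Multiset ℕ) :
    ‖if P then wt x q s else 0‖ ≤ ‖wt x q s‖ ∧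
    ‖if P then 0 else wt x q s‖ ≤ ‖wt x q s‖ := by
  constructor <;> split <;> simp

lemma tail_eq (x q : ℂ) (hq : ‖q‖ < 1) (m : ℕ) :
    ∑' (c : ℕ), ∑' (s : Msub m), wt x q (s.1 + Multiset.replicate (c + 1) (m + 1))
      = q ^ (m + 1) * (1 - q ^ (m + 1))⁻¹ *
        ((∑' s : Msub m, (if s.1.sup % 2 = (m + 1) % 2 then wt x q s.1 else 0))
          + x * ∑' s : Msub m, (if s.1.sup % 2 = (m + 1) % 2 then 0 else wt x q s.1)) := by
  have hnorm : ‖q ^ (m + 1)‖ < 1 := by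
    rw [norm_pow]
    exact pow_lt_one₀ (norm_nonneg q) hq (Nat.succ_ne_zero m)
  have hsum1 : Summable (fun s : Msub m =>
      (if s.1.sup % 2 = (m + 1) % 2 then wt x q s.1 else 0)) :=
    summable_of_le_wt x q hq m
      (fun t => if t.sup % 2 = (m + 1) % 2 then wt x q t else 0)
      (fun s => (abs_ite_le_wt x q (s.1.sup % 2 = (m + 1) % 2) s.1).1)
  have hsum2 : Summable (fun s : Msub m =>
      (if s.1.sup % 2 = (m + 1) % 2 then 0 else wt x q s.1)) :=
    summable_of_le_wt x q hq m
      (fun t => if t.sup % 2 = (m + 1) % 2 then 0 else wt x q t)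
      (fun s => (abs_ite_le_wt x q (s.1.sup % 2 = (m + 1) % 2) s.1).2)
  have hin : ∀ c : ℕ, ∑' (s : Msub m), wt x q (s.1 + Multiset.replicate (c + 1) (m + 1))
      = (q ^ (m + 1)) ^ (c + 1) *
        ((∑' s : Msub m, (if s.1.sup % 2 = (m + 1) % 2 then wt x q s.1 else 0))
          + x * ∑' s : Msub m, (if s.1.sup % 2 = (m + 1) % 2 then 0 else wt x q s.1)) := by
    intro c
    rw [← tsum_mul_left, ← Summable.tsum_add hsum1 (hsum2.mul_left x), ← tsum_mul_left]
    apply tsum_congr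
    intro s
    rw [wt_add_replicate]
    congr 1
    by_cases h : s.1.sup % 2 = (m + 1) % 2 <;> simp [h]
  rw [tsum_congr hin, tsum_mul_right]
  congr 1
  have : ∀ c : ℕ, (q ^ (m + 1)) ^ (c + 1) = q ^ (m + 1) * (q ^ (m + 1)) ^ c :=
    fun c => pow_succ' _ _
  rw [tsum_congr this, tsum_mul_left, tsum_geometric_of_norm_lt_one hnorm]
lemma SA_succ_even (x q : ℂ) (hq : ‖q‖ < 1) (m : ℕ) (hm : (m + 1) % 2 = 0) :
    SA x q (m + 1) = SA x q m
      + q ^ (m + 1) * (1 - q ^ (m + 1))⁻¹ * (SA x q m + x * SB x q m) := by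
  have h := tsum_msub_succ x q hq m (fun t => if t.sup % 2 = 0 then wt x q t else 0)
    (fun s => (abs_ite_le_wt x q (s.1.sup % 2 = 0) s.1).1)
  show (∑' s : Msub (m+1), (if s.1.sup % 2 = 0 then wt x q s.1 else 0)) = _
  rw [h]
  congr 1
  calc ∑' (c : ℕ), ∑' (s : Msub m),
        (if (s.1 + Multiset.replicate (c + 1) (m + 1)).sup % 2 = 0
          then wt x q (s.1 + Multiset.replicate (c + 1) (m + 1)) else 0)
      = ∑' (c : ℕ), ∑' (s : Msub m), wt x q (s.1 + Multiset.replicate (c + 1) (m + 1)) := by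
        apply tsum_congr; intro c; apply tsum_congr; intro s
        rw [sup_add_replicate s.1 (m + 1) c (fun a ha => le_trans (s.2 a ha).2 (Nat.le_succ m)),
          hm]
        simp
    _ = q ^ (m + 1) * (1 - q ^ (m + 1))⁻¹ *
        ((∑' s : Msub m, (if s.1.sup % 2 = (m + 1) % 2 then wt x q s.1 else 0))
          + x * ∑' s : Msub m, (if s.1.sup % 2 = (m + 1) % 2 then 0 else wt x q s.1)) :=
        tail_eq x q hq m
    _ = _ := by rw [hm]; rfl

lemma SB_succ_even (x q : ℂ) (hq : ‖q‖ < 1) (m : ℕ) (hm : (m + 1) % 2 = 0) :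
    SB x q (m + 1) = SB x q m := by
  have h := tsum_msub_succ x q hq m (fun t => if t.sup % 2 = 0 then 0 else wt x q t)
    (fun s => (abs_ite_le_wt x q (s.1.sup % 2 = 0) s.1).2)
  show (∑' s : Msub (m+1), (if s.1.sup % 2 = 0 then 0 else wt x q s.1)) = _
  rw [h]
  have htail : ∀ (c : ℕ) (s : Msub m),
      (if (s.1 + Multiset.replicate (c + 1) (m + 1)).sup % 2 = 0
        then (0:ℂ) else wt x q (s.1 + Multiset.replicate (c + 1) (m + 1))) = 0 := by
    intro c s
    rw [sup_add_replicate s.1 (m + 1) c (fun a ha => le_trans (s.2 a ha).2 (Nat.le_succ m)), hm]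
    simp
  rw [tsum_congr (fun c => tsum_congr (fun s => htail c s))]
  simp [SB]

lemma SA_succ_odd (x q : ℂ) (hq : ‖q‖ < 1) (m : ℕ) (hm : (m + 1) % 2 = 1) :
    SA x q (m + 1) = SA x q m := by
  have h := tsum_msub_succ x q hq m (fun t => if t.sup % 2 = 0 then wt x q t else 0)
    (fun s => (abs_ite_le_wt x q (s.1.sup % 2 = 0) s.1).1)
  show (∑' s : Msub (m+1), (if s.1.sup % 2 = 0 then wt x q s.1 else 0)) = _
  rw [h]
  have htail : ∀ (c : ℕ) (s : Msub m),
      (if (s.1 + Multiset.replicate (c + 1) (m + 1)).sup % 2 = 0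
        then wt x q (s.1 + Multiset.replicate (c + 1) (m + 1)) else (0:ℂ)) = 0 := by
    intro c s
    rw [sup_add_replicate s.1 (m + 1) c (fun a ha => le_trans (s.2 a ha).2 (Nat.le_succ m)), hm]
    simp
  rw [tsum_congr (fun c => tsum_congr (fun s => htail c s))]
  simp [SA]

lemma SB_succ_odd (x q : ℂ) (hq : ‖q‖ < 1) (m : ℕ) (hm : (m + 1) % 2 = 1) :
    SB x q (m + 1) = SB x q m
      + q ^ (m + 1) * (1 - q ^ (m + 1))⁻¹ * (SB x q m + x * SA x q m) := by
  have h := tsum_msub_succ x q hq m (fun t => if t.sup % 2 = 0 then 0 else wt x q t)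
    (fun s => (abs_ite_le_wt x q (s.1.sup % 2 = 0) s.1).2)
  show (∑' s : Msub (m+1), (if s.1.sup % 2 = 0 then 0 else wt x q s.1)) = _
  rw [h]
  congr 1
  calc ∑' (c : ℕ), ∑' (s : Msub m),
        (if (s.1 + Multiset.replicate (c + 1) (m + 1)).sup % 2 = 0
          then (0:ℂ) else wt x q (s.1 + Multiset.replicate (c + 1) (m + 1)))
      = ∑' (c : ℕ), ∑' (s : Msub m), wt x q (s.1 + Multiset.replicate (c + 1) (m + 1)) := by
        apply tsum_congr; intro c; apply tsum_congr; intro s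
        rw [sup_add_replicate s.1 (m + 1) c (fun a ha => le_trans (s.2 a ha).2 (Nat.le_succ m)),
          hm]
        simp
    _ = q ^ (m + 1) * (1 - q ^ (m + 1))⁻¹ *
        ((∑' s : Msub m, (if s.1.sup % 2 = (m + 1) % 2 then wt x q s.1 else 0))
          + x * ∑' s : Msub m, (if s.1.sup % 2 = (m + 1) % 2 then 0 else wt x q s.1)) :=
        tail_eq x q hq m
    _ = _ := by
        rw [hm]
        have e1 : ∑' s : Msub m, (if s.1.sup % 2 = 1 then wt x q s.1 else 0)
            = SB x q m := by
          apply tsum_congr; intro s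
          rcases Nat.mod_two_eq_zero_or_one s.1.sup with h2 | h2 <;> simp [SB, h2]
        have e2 : ∑' s : Msub m, (if s.1.sup % 2 = 1 then (0:ℂ) else wt x q s.1)
            = SA x q m := by
          apply tsum_congr; intro s
          rcases Nat.mod_two_eq_zero_or_one s.1.sup with h2 | h2 <;> simp [SA, h2]
        rw [e1, e2]

lemma top_sum_eq (x q : ℂ) (hq : ‖q‖ < 1) (m : ℕ) (hm : (m + 1) % 2 = 0) :
    (∑' s : Msub (m + 1), (if (m + 1) ∈ s.1 then wt x q s.1 else 0))
      = q ^ (m + 1) * (1 - q ^ (m + 1))⁻¹ * (SA x q m + x * SB x q m) := by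
  have h := tsum_msub_succ x q hq m (fun t => if (m + 1) ∈ t then wt x q t else 0)
    (fun s => (abs_ite_le_wt x q ((m + 1) ∈ s.1) s.1).1)
  rw [h]
  have h0 : ∀ s : Msub m, (if (m + 1) ∈ s.1 then wt x q s.1 else (0:ℂ)) = 0 := by
    intro s
    rw [if_neg]
    intro hmem
    have := s.2 _ hmem
    omega
  rw [tsum_congr h0, tsum_zero, zero_add]
  calc ∑' (c : ℕ), ∑' (s : Msub m),
        (if (m + 1) ∈ s.1 + Multiset.replicate (c + 1) (m + 1)
          then wt x q (s.1 + Multiset.replicate (c + 1) (m + 1)) else 0)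
      = ∑' (c : ℕ), ∑' (s : Msub m), wt x q (s.1 + Multiset.replicate (c + 1) (m + 1)) := by
        apply tsum_congr; intro c; apply tsum_congr; intro s
        rw [if_pos (Multiset.mem_add.mpr (Or.inr
          (Multiset.mem_replicate.mpr ⟨Nat.succ_ne_zero c, rfl⟩)))]
    _ = _ := by rw [tail_eq x q hq m, hm]; rfl
lemma one_sub_pow_ne (q : ℂ) (hq : ‖q‖ < 1) (n : ℕ) (hn : n ≠ 0) :
    (1 : ℂ) - q ^ n ≠ 0 := by
  have h1 : ‖q ^ n‖ < 1 := by
    rw [norm_pow]; exact pow_lt_one₀ (norm_nonneg q) hq hn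
  intro h
  rw [sub_eq_zero] at h
  rw [← h] at h1
  simp at h1

lemma qPochQ_succ (q : ℂ) (n : ℕ) :
    qPoch q q (n + 1) = qPoch q q n * (1 - q ^ (n + 1)) := by
  unfold qPoch
  rw [Finset.prod_range_succ, ← pow_succ']

lemma qPoch2_succ (q : ℂ) (n : ℕ) :
    qPoch (q ^ 2) (q ^ 2) (n + 1) = qPoch (q ^ 2) (q ^ 2) n * (1 - q ^ (2 * n + 2)) := by
  unfold qPoch
  rw [Finset.prod_range_succ]
  congr 2
  rw [← pow_mul, ← pow_add]
  congr 1
  omega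

lemma qPochQ_ne (q : ℂ) (hq : ‖q‖ < 1) (n : ℕ) : qPoch q q n ≠ 0 := by
  unfold qPoch
  rw [Finset.prod_ne_zero_iff]
  intro i _
  rw [← pow_succ']
  exact one_sub_pow_ne q hq (i + 1) (Nat.succ_ne_zero i)

lemma qPoch2_ne (q : ℂ) (hq : ‖q‖ < 1) (n : ℕ) : qPoch (q ^ 2) (q ^ 2) n ≠ 0 := by
  unfold qPoch
  rw [Finset.prod_ne_zero_iff]
  intro i _
  have h : (q ^ 2) * (q ^ 2) ^ i = q ^ (2 * i + 2) := by
    rw [← pow_mul, ← pow_add]; congr 1; omega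
  rw [h]
  exact one_sub_pow_ne q hq (2 * i + 2) (by omega)

noncomputable def CA (x q : ℂ) (m : ℕ) : ℂ :=
  ∑ j ∈ Finset.range (m / 2 + 1),
    x ^ (2 * j) * q ^ (j * (2 * j + 1)) /
      (qPoch q q (2 * j) * qPoch (q ^ 2) (q ^ 2) (m / 2 - j))

noncomputable def CB (x q : ℂ) (m : ℕ) : ℂ :=
  ∑ j ∈ Finset.range ((m + 1) / 2),
    x ^ (2 * j + 1) * q ^ ((2 * j + 1) * (j + 1)) /
      (qPoch q q (2 * j + 1) * qPoch (q ^ 2) (q ^ 2) ((m + 1) / 2 - 1 - j))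

lemma CA_odd (x q : ℂ) (t : ℕ) : CA x q (2 * t + 1) = CA x q (2 * t) := by
  simp only [CA, show (2 * t + 1) / 2 = t from by omega, show (2 * t) / 2 = t from by omega]

lemma CB_even (x q : ℂ) (t : ℕ) : CB x q (2 * t + 2) = CB x q (2 * t + 1) := by
  simp only [CB, show (2 * t + 2 + 1) / 2 = t + 1 from by omega,
    show (2 * t + 1 + 1) / 2 = t + 1 from by omega]
lemma qPoch_zero (a q : ℂ) : qPoch a q 0 = 1 := by simp [qPoch]

lemma sum_restruct (F G B : ℕ → ℂ) (w x : ℂ) (t : ℕ)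
    (I0 : F 0 = G 0 + w * G 0)
    (Itop : F (t + 1) = w * (x * B t))
    (Imid : ∀ j, j < t → F (j + 1) = G (j + 1) + w * G (j + 1) + w * (x * B j)) :
    ∑ j ∈ Finset.range (t + 2), F j
      = (∑ j ∈ Finset.range (t + 1), G j)
        + w * ((∑ j ∈ Finset.range (t + 1), G j) + x * ∑ j ∈ Finset.range (t + 1), B j) := by
  rw [Finset.sum_range_succ' F (t + 1), Finset.sum_range_succ (fun j => F (j + 1)) t,
    Finset.sum_congr rfl (fun j hj => Imid j (Finset.mem_range.mp hj)), I0, Itop,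
    Finset.sum_range_succ' G t, Finset.sum_range_succ B t,
    Finset.sum_add_distrib, Finset.sum_add_distrib, ← Finset.mul_sum, ← Finset.mul_sum,
    ← Finset.mul_sum]
  ring

lemma sum_restruct_odd (F G A : ℕ → ℂ) (w x : ℂ) (t : ℕ)
    (Itop : F t = w * (x * A t))
    (Imid : ∀ j, j < t → F j = G j + w * G j + w * (x * A j)) :
    ∑ j ∈ Finset.range (t + 1), F j
      = (∑ j ∈ Finset.range t, G j)
        + w * ((∑ j ∈ Finset.range t, G j) + x * ∑ j ∈ Finset.range (t + 1), A j) := by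
  rw [Finset.sum_range_succ F t, Finset.sum_range_succ A t,
    Finset.sum_congr rfl (fun j hj => Imid j (Finset.mem_range.mp hj)), Itop,
    Finset.sum_add_distrib, Finset.sum_add_distrib, ← Finset.mul_sum, ← Finset.mul_sum,
    ← Finset.mul_sum]
  ring

lemma sum_restruct_diff (L F G : ℕ → ℂ) (t : ℕ)
    (Itop : L (t + 1) = F (t + 1))
    (Imid : ∀ j, j < t + 1 → L j = F j - G j) :
    ∑ j ∈ Finset.range (t + 2), L j
      = ∑ j ∈ Finset.range (t + 2), F j - ∑ j ∈ Finset.range (t + 1), G j := by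
  rw [Finset.sum_range_succ L (t + 1), Finset.sum_range_succ F (t + 1),
    Finset.sum_congr rfl (fun j hj => Imid j (Finset.mem_range.mp hj)), Itop,
    Finset.sum_sub_distrib]
  ring

lemma choose2 (j : ℕ) : Nat.choose (2 * j) 2 + 2 * j = j * (2 * j + 1) := by
  rw [Nat.choose_two_right]
  rcases j with _ | i
  · rfl
  · have h1 : 2 * (i + 1) - 1 = 2 * i + 1 := by omega
    rw [h1]
    have h2 : 2 * (i + 1) * (2 * i + 1) = ((i + 1) * (2 * i + 1)) * 2 := by ring
    rw [h2, Nat.mul_div_cancel _ (by norm_num : 0 < 2)]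
    ring

lemma gen_mid (E N P Q A B e W x : ℂ) (hP : P ≠ 0) (hQ : Q ≠ 0) (hA : A ≠ 0) (hB : B ≠ 0)
    (hW : W ≠ 0)
    (key : E * W = E * B * W + e * (E * B) + e * (x * (N * A))) :
    E / (P * A * (Q * B))
      = E / (P * A * Q) + e * W⁻¹ * (E / (P * A * Q))
        + e * W⁻¹ * (x * (N / (P * (Q * B)))) := by
  have hc : W * W⁻¹ = 1 := mul_inv_cancel₀ hW
  have h3 : ∀ T : ℂ, W * (e * W⁻¹ * T) = e * T := fun T => by
    calc W * (e * W⁻¹ * T) = (W * W⁻¹) * (e * T) := by ring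
      _ = e * T := by rw [hc, one_mul]
  apply mul_left_cancel₀ hW
  rw [mul_add, mul_add, h3, h3]
  field_simp
  linear_combination key

lemma gen_diff (M P Q b : ℂ) (hP : P ≠ 0) (hQ : Q ≠ 0) (hB : 1 - b ≠ 0) :
    M * b / (P * (Q * (1 - b))) = M / (P * (Q * (1 - b))) - M / (P * Q) := by
  field_simp
  ring

lemma CA_step (x q : ℂ) (hq : ‖q‖ < 1) (t : ℕ) :
    CA x q (2 * t + 2) = CA x q (2 * t + 1)
      + q ^ (2 * t + 2) * (1 - q ^ (2 * t + 2))⁻¹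
        * (CA x q (2 * t + 1) + x * CB x q (2 * t + 1)) := by
  have e1 : (2 * t + 2) / 2 = t + 1 := by omega
  have e2 : (2 * t + 1) / 2 = t := by omega
  have e3 : (2 * t + 1 + 1) / 2 = t + 1 := by omega
  simp only [CA, CB, e1, e2, e3, Nat.add_sub_cancel]
  rw [show t + 1 + 1 = t + 2 from by omega]
  apply sum_restruct
  · -- I0
    simp only [Nat.mul_zero, Nat.zero_mul, Nat.sub_zero, pow_zero, Nat.zero_add,
      Nat.mul_one, qPoch_zero, one_mul]
    rw [qPoch2_succ q t]
    have h1 := qPoch2_ne q hq t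
    have h2 := one_sub_pow_ne q hq (2 * t + 2) (by omega)
    field_simp
    ring
  · -- Itop
    rw [show t + 1 - (t + 1) = 0 from by omega, show t - t = 0 from by omega,
      show 2 * (t + 1) = 2 * t + 1 + 1 from by omega, qPochQ_succ q (2 * t + 1), qPoch_zero]
    have h1 := qPochQ_ne q hq (2 * t + 1)
    have h2 := one_sub_pow_ne q hq (2 * t + 1 + 1) (by omega)
    have h3 := one_sub_pow_ne q hq (2 * t + 2) (by omega)
    rw [show (2 * t + 1 + 1) = 2 * t + 2 from by omega]
    field_simp
    ring
  · -- Imid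
    intro j hj
    obtain ⟨u, hu1, hu2⟩ : ∃ u, t - j = u + 1 ∧ t = j + u + 1 := ⟨t - j - 1, by omega, by omega⟩
    rw [show t + 1 - (j + 1) = u + 1 from by omega, show t - (j + 1) = u from by omega,
      hu1, show 2 * (j + 1) = 2 * j + 1 + 1 from by omega, qPochQ_succ q (2 * j + 1),
      qPoch2_succ q u, show 2 * t + 2 = 2 * j + 2 * u + 4 from by omega]
    have h1 := qPochQ_ne q hq (2 * j + 1)
    have h2 := qPoch2_ne q hq u
    have h3 := one_sub_pow_ne q hq (2 * j + 1 + 1) (by omega)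
    have h4 := one_sub_pow_ne q hq (2 * u + 2) (by omega)
    have h5 := one_sub_pow_ne q hq (2 * j + 2 * u + 4) (by omega)
    obtain ⟨W, hWd⟩ : ∃ W : ℂ, W = 1 - q ^ (2 * j + 2 * u + 4) := ⟨_, rfl⟩
    rw [← hWd] at h5 ⊢
    exact gen_mid _ _ _ _ _ _ _ _ _ h1 h2 h3 h4 h5 (by rw [hWd]; ring)

lemma CB_step (x q : ℂ) (hq : ‖q‖ < 1) (t : ℕ) :
    CB x q (2 * t + 1) = CB x q (2 * t)
      + q ^ (2 * t + 1) * (1 - q ^ (2 * t + 1))⁻¹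
        * (CB x q (2 * t) + x * CA x q (2 * t)) := by
  have e1 : (2 * t + 1 + 1) / 2 = t + 1 := by omega
  have e2 : (2 * t + 1) / 2 = t := by omega
  have e3 : (2 * t) / 2 = t := by omega
  simp only [CA, CB, e1, e2, e3, Nat.add_sub_cancel]
  apply sum_restruct_odd
  · -- Itop
    rw [show t - t = 0 from by omega, qPoch_zero,
      show 2 * t + 1 = 2 * t + 1 from rfl, qPochQ_succ q (2 * t)]
    have h1 := qPochQ_ne q hq (2 * t)
    have h2 := one_sub_pow_ne q hq (2 * t + 1) (by omega)
    field_simp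
    ring
  · -- Imid
    intro j hj
    obtain ⟨u, hu1, hu2⟩ : ∃ u, t - 1 - j = u ∧ t - j = u + 1 := ⟨t - 1 - j, rfl, by omega⟩
    rw [hu1, hu2, qPoch2_succ q u, qPochQ_succ q (2 * j),
      show 2 * t + 1 = 2 * j + 2 * u + 3 from by omega]
    have h1 := qPochQ_ne q hq (2 * j)
    have h2 := qPoch2_ne q hq u
    have h3 := one_sub_pow_ne q hq (2 * j + 1) (by omega)
    have h4 := one_sub_pow_ne q hq (2 * u + 2) (by omega)
    have h5 := one_sub_pow_ne q hq (2 * j + 2 * u + 3) (by omega)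
    obtain ⟨W, hWd⟩ : ∃ W : ℂ, W = 1 - q ^ (2 * j + 2 * u + 3) := ⟨_, rfl⟩
    rw [← hWd] at h5 ⊢
    exact gen_mid _ _ _ _ _ _ _ _ _ h1 h2 h3 h4 h5 (by rw [hWd]; ring)

lemma RHS_eq (x q : ℂ) (hq : ‖q‖ < 1) (t : ℕ) :
    q ^ (2 * (t + 1)) * ∑ j ∈ Finset.range (t + 2),
        x ^ (2 * j) * q ^ (Nat.choose (2 * j) 2) /
          (qPoch q q (2 * j) * qPoch (q ^ 2) (q ^ 2) (t + 1 - j))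
      = CA x q (2 * t + 2) - CA x q (2 * t + 1) := by
  have e1 : (2 * t + 2) / 2 = t + 1 := by omega
  have e2 : (2 * t + 1) / 2 = t := by omega
  simp only [CA, e1, e2]
  rw [show t + 1 + 1 = t + 2 from by omega, Finset.mul_sum]
  apply sum_restruct_diff
  · -- Itop
    simp only [show t + 1 - (t + 1) = 0 from by omega, qPoch_zero, mul_one]
    have hc := choose2 (t + 1)
    have hpow : q ^ (2 * (t + 1)) * q ^ (Nat.choose (2 * (t + 1)) 2)
        = q ^ ((t + 1) * (2 * (t + 1) + 1)) := by
      rw [← pow_add]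
      congr 1
      generalize hA : Nat.choose (2 * (t + 1)) 2 = A at hc
      generalize hB : (t + 1) * (2 * (t + 1) + 1) = B at hc
      omega
    rw [mul_div_assoc']
    congr 1
    calc q ^ (2 * (t + 1)) * (x ^ (2 * (t + 1)) * q ^ (Nat.choose (2 * (t + 1)) 2))
        = x ^ (2 * (t + 1)) * (q ^ (2 * (t + 1)) * q ^ (Nat.choose (2 * (t + 1)) 2)) := by ring
      _ = _ := by rw [hpow]
  · -- Imid
    intro j hj
    obtain ⟨u, hu1, hu2⟩ : ∃ u, t - j = u ∧ t + 1 - j = u + 1 := ⟨t - j, rfl, by omega⟩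
    rw [hu1, hu2, qPoch2_succ q u]
    have hc := choose2 j
    have hpow : q ^ (2 * (t + 1)) * q ^ (Nat.choose (2 * j) 2)
        = q ^ (j * (2 * j + 1)) * q ^ (2 * u + 2) := by
      rw [← pow_add, ← pow_add]
      congr 1
      generalize hA : Nat.choose (2 * j) 2 = A at hc
      generalize hB : j * (2 * j + 1) = B at hc
      omega
    have h1 := qPochQ_ne q hq (2 * j)
    have h2 := qPoch2_ne q hq u
    have h4 := one_sub_pow_ne q hq (2 * u + 2) (by omega)
    rw [mul_div_assoc']
    have hnum : q ^ (2 * (t + 1)) * (x ^ (2 * j) * q ^ (Nat.choose (2 * j) 2))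
        = x ^ (2 * j) * q ^ (j * (2 * j + 1)) * q ^ (2 * u + 2) := by
      calc q ^ (2 * (t + 1)) * (x ^ (2 * j) * q ^ (Nat.choose (2 * j) 2))
          = x ^ (2 * j) * (q ^ (2 * (t + 1)) * q ^ (Nat.choose (2 * j) 2)) := by ring
        _ = x ^ (2 * j) * (q ^ (j * (2 * j + 1)) * q ^ (2 * u + 2)) := by rw [hpow]
        _ = _ := by ring
    rw [hnum]
    exact gen_diff _ _ _ _ h1 h2 h4
lemma parityChanges_single (a : ℕ) : parityChanges [a] = 0 := rfl

lemma SA_zero (x q : ℂ) : SA x q 0 = 1 := by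
  rw [SA, tsum_eq_single (default : Msub 0) (fun b hb => absurd (Subsingleton.elim b default) hb)]
  have hd : (default : Msub 0).1 = 0 := rfl
  rw [hd]
  simp [wt, pc, parityIndex, parityChanges_single]

lemma SB_zero (x q : ℂ) : SB x q 0 = 0 := by
  rw [SB, tsum_eq_single (default : Msub 0) (fun b hb => absurd (Subsingleton.elim b default) hb)]
  have hd : (default : Msub 0).1 = 0 := rfl
  rw [hd]
  simp

lemma CA_zero (x q : ℂ) : CA x q 0 = 1 := by
  simp [CA, qPoch]

lemma CB_zero (x q : ℂ) : CB x q 0 = 0 := by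
  simp [CB]

lemma SAB_eq (x q : ℂ) (hq : ‖q‖ < 1) : ∀ t : ℕ,
    (SA x q (2 * t) = CA x q (2 * t) ∧ SB x q (2 * t) = CB x q (2 * t)) ∧
    (SA x q (2 * t + 1) = CA x q (2 * t + 1) ∧ SB x q (2 * t + 1) = CB x q (2 * t + 1)) := by
  have odd_step : ∀ t : ℕ, (SA x q (2 * t) = CA x q (2 * t) ∧ SB x q (2 * t) = CB x q (2 * t)) →
      (SA x q (2 * t + 1) = CA x q (2 * t + 1) ∧ SB x q (2 * t + 1) = CB x q (2 * t + 1)) := by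
    rintro t ⟨hA, hB⟩
    have o1 := SA_succ_odd x q hq (2 * t) (by omega)
    have o2 := SB_succ_odd x q hq (2 * t) (by omega)
    have c1 := CA_odd x q t
    have c2 := CB_step x q hq t
    constructor
    · rw [o1, hA, c1]
    · rw [o2, hB, hA, c2]
  intro t
  induction t with
  | zero =>
      have base : SA x q (2 * 0) = CA x q (2 * 0) ∧ SB x q (2 * 0) = CB x q (2 * 0) := by
        constructor
        · rw [show 2 * 0 = 0 from rfl, SA_zero, CA_zero]
        · rw [show 2 * 0 = 0 from rfl, SB_zero, CB_zero]
      exact ⟨base, odd_step 0 base⟩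
  | succ t ih =>
      have hodd := ih.2
      have e1 := SA_succ_even x q hq (2 * t + 1) (by omega)
      have e2 := SB_succ_even x q hq (2 * t + 1) (by omega)
      rw [show 2 * t + 1 + 1 = 2 * (t + 1) from by omega] at e1 e2
      have c1 := CA_step x q hq t
      have c2 := CB_even x q t
      rw [show 2 * t + 2 = 2 * (t + 1) from by omega] at c1 c2
      have heven : SA x q (2 * (t + 1)) = CA x q (2 * (t + 1)) ∧
          SB x q (2 * (t + 1)) = CB x q (2 * (t + 1)) := by
        constructor
        · rw [e1, hodd.1, hodd.2, c1]
        · rw [e2, hodd.2, ← c2]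
      exact ⟨heven, odd_step (t + 1) heven⟩

lemma main_sum (x q : ℂ) (hq : ‖q‖ < 1) (k : ℕ) (hk : 1 ≤ k) :
    (∑' s : Msub (2 * k), (if (2 * k) ∈ s.1 then wt x q s.1 else 0))
      = q ^ (2 * k) * ∑ j ∈ Finset.range (k + 1),
          x ^ (2 * j) * q ^ (Nat.choose (2 * j) 2) /
            (qPoch q q (2 * j) * qPoch (q ^ 2) (q ^ 2) (k - j)) := by
  obtain ⟨t, rfl⟩ : ∃ t, k = t + 1 := ⟨k - 1, by omega⟩
  have h1 := top_sum_eq x q hq (2 * t + 1) (by omega)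
  rw [show 2 * t + 1 + 1 = 2 * (t + 1) from by omega] at h1
  rw [h1]
  have h2 := (SAB_eq x q hq t).2
  rw [h2.1, h2.2]
  have h3 := CA_step x q hq t
  have h4 := RHS_eq x q hq t
  rw [show t + 1 + 1 = t + 2 from by omega, h4]
  rw [show 2 * (t + 1) = 2 * t + 2 from by omega]
  linear_combination -h3
theorem stmt13 (k : ℕ) (hk : 1 ≤ k) (x q : ℂ) (hq : ‖q‖ < 1) :
    ∑' n : ℕ, ∑ p ∈ Finset.univ.filter
        (fun p : n.Partition => 2 * k ∈ p.parts ∧ ∀ a ∈ p.parts, a ≤ 2 * k),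
        x ^ partPi p * q ^ n =
    q ^ (2 * k) * ∑ j ∈ Finset.range (k + 1),
        x ^ (2 * j) * q ^ Nat.choose (2 * j) 2 /
        (qPoch q q (2 * j) * qPoch (q ^ 2) (q ^ 2) (k - j)) := by
  classical
  set F : (Σ n : ℕ, n.Partition) → ℂ := fun σ => x ^ partPi σ.2 * q ^ σ.1 with hF
  set S : Set (Σ n : ℕ, n.Partition) :=
    {σ | 2 * k ∈ σ.2.parts ∧ ∀ a ∈ σ.2.parts, a ≤ 2 * k} with hS
  set T : Set (Msub (2 * k)) := {s | 2 * k ∈ s.1} with hT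
  -- the bijection
  have hwtF : ∀ σ : Σ n : ℕ, n.Partition, F σ = wt x q σ.2.parts := by
    rintro ⟨n, p⟩
    show x ^ partPi p * q ^ n = x ^ pc p.parts * q ^ p.parts.sum
    rw [p.parts_sum]
    rfl
  let f : ↥S → ↥T := fun σ =>
    ⟨⟨σ.1.2.parts, fun a ha => ⟨σ.1.2.parts_pos ha, σ.2.2 a ha⟩⟩, σ.2.1⟩
  have hinj : Function.Injective f := by
    rintro ⟨⟨n, p⟩, hp⟩ ⟨⟨n', p'⟩, hp'⟩ h
    have hparts : p.parts = p'.parts := congrArg (fun z => z.1.1) h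
    have hn : n = n' := by rw [← p.parts_sum, ← p'.parts_sum, hparts]
    subst hn
    apply Subtype.ext
    exact congrArg (Sigma.mk n) (Nat.Partition.ext hparts)
  have hsurj : Function.Surjective f := by
    rintro ⟨⟨s, hs⟩, hmem⟩
    refine ⟨⟨⟨s.sum, ⟨s, fun {a} ha => (hs a ha).1, rfl⟩⟩, ⟨hmem, fun a ha => (hs a ha).2⟩⟩, ?_⟩
    apply Subtype.ext
    apply Subtype.ext
    rfl
  let e : ↥S ≃ ↥T := Equiv.ofBijective f ⟨hinj, hsurj⟩
  -- summability infrastructure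
  have hMsub : Summable (fun s : Msub (2 * k) =>
      if (2 * k) ∈ s.1 then wt x q s.1 else 0) :=
    summable_of_le_wt x q hq (2 * k) (fun t => if (2 * k) ∈ t then wt x q t else 0)
      (fun s => (abs_ite_le_wt x q ((2 * k) ∈ s.1) s.1).1)
  have hTsum : Summable (fun s : ↥T => wt x q s.1.1) := by
    have h1 : Summable ((fun s : Msub (2 * k) =>
        if (2 * k) ∈ s.1 then wt x q s.1 else 0) ∘ (Subtype.val : ↥T → Msub (2 * k))) :=
      hMsub.subtype T
    apply h1.congr
    intro s
    show (if (2 * k) ∈ s.1.1 then wt x q s.1.1 else 0) = wt x q s.1.1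
    have hm : (2 * k) ∈ s.1.1 := s.2
    rw [if_pos hm]
  have hSsum : Summable (fun σ : ↥S => F σ.1) := by
    have h2 : Summable ((fun s : ↥T => wt x q s.1.1) ∘ e) := e.summable_iff.mpr hTsum
    apply h2.congr
    intro σ
    show wt x q σ.1.2.parts = F σ.1
    rw [hwtF]
  have hsig : Summable (fun σ : Σ n : ℕ, n.Partition => if σ ∈ S then F σ else 0) := by
    have h3 : Summable (F ∘ (Subtype.val : ↥S → Σ n : ℕ, n.Partition)) := hSsum
    have h4 := (summable_subtype_iff_indicator (f := F) (s := S)).mp h3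
    apply h4.congr
    intro σ
    by_cases h : σ ∈ S
    · rw [Set.indicator_of_mem h, if_pos h]
    · rw [Set.indicator_of_notMem h, if_neg h]
  -- main chain
  calc ∑' n : ℕ, ∑ p ∈ Finset.univ.filter
        (fun p : n.Partition => 2 * k ∈ p.parts ∧ ∀ a ∈ p.parts, a ≤ 2 * k),
        x ^ partPi p * q ^ n
      = ∑' (n : ℕ) (p : n.Partition),
          (if (⟨n, p⟩ : Σ n : ℕ, n.Partition) ∈ S then F ⟨n, p⟩ else 0) := by
        apply tsum_congr
        intro n
        rw [Finset.sum_filter, tsum_fintype]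
        apply Finset.sum_congr rfl
        intro p _
        congr 1
    _ = ∑' σ : Σ n : ℕ, n.Partition, (if σ ∈ S then F σ else 0) :=
        (Summable.tsum_sigma' (fun n => Summable.of_finite) hsig).symm
    _ = ∑' σ : ↥S, F σ := by
        rw [tsum_subtype S F]
        apply tsum_congr
        intro σ
        by_cases h : σ ∈ S
        · rw [Set.indicator_of_mem h, if_pos h]
        · rw [Set.indicator_of_notMem h, if_neg h]
    _ = ∑' s : ↥T, wt x q s.1.1 := by
        rw [← e.tsum_eq (fun s : ↥T => wt x q s.1.1)]
        apply tsum_congr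
        intro σ
        show F σ.1 = wt x q σ.1.2.parts
        rw [hwtF]
    _ = ∑' s : Msub (2 * k), (if (2 * k) ∈ s.1 then wt x q s.1 else 0) := by
        rw [tsum_subtype T (fun s : Msub (2 * k) => wt x q s.1)]
        apply tsum_congr
        intro s
        by_cases h : (2 * k) ∈ s.1
        · rw [Set.indicator_of_mem (show s ∈ T from h), if_pos h]
        · rw [Set.indicator_of_notMem (show s ∉ T from h), if_neg h]
    _ = _ := main_sum x q hq k hk


end SolPaper
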